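/- arXiv:2109.10623 — 5 statements merged into one kernel-verified Lean document; each statement's English description precedes it below -/
import Mathlib

section
/- Let H be a Hilbert space, E an inner product space, Ψ: E → H a bounded linear operator, and L a positive self-adjoint bounded operator on H. Fix λ > 0, let B = ΨΨ*, and suppose ‖(L + λI)^{-1/2}(B − L)(L + λI)^{-1/2}‖ ≤ 1/2. Then for every f ∈ H, the vector β̂ = Ψ*(B + λI)^{-1} f satisfies ‖β̂‖² ≤ 2 ⟨f, (L + λI)^{-1} f⟩. -/
open ContinuousLinearMap

/-- Norm bound on the coefficient vector of the random-features approximation: if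
`B = ΨΨ*` satisfies `‖(L+λI)^{-1/2}(B − L)(L+λI)^{-1/2}‖ ≤ 1/2`, then
`β̂ = Ψ*(B+λI)^{-1}f` satisfies `‖β̂‖² ≤ 2⟨f, (L+λI)^{-1}f⟩`.  Here `S` is the
(unique) positive self-adjoint square root of `(L+λI)^{-1}`, i.e. `S = (L+λI)^{-1/2}`. -/
theorem coefficient_norm_bound
    {E H : Type*} [NormedAddCommGroup E] [InnerProductSpace ℝ E] [CompleteSpace E]
    [NormedAddCommGroup H] [InnerProductSpace ℝ H] [CompleteSpace H]
    (Ψ : E →L[ℝ] H) (L : H →L[ℝ] H) (hL : L.IsPositive)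
    (lam : ℝ) (hlam : 0 < lam)
    (S : H →L[ℝ] H) (hSpos : S.IsPositive)
    (hS : S * S * (L + lam • 1) = 1 ∧ (L + lam • 1) * (S * S) = 1)
    (hcontrast : ‖S * (Ψ.comp (adjoint Ψ) - L) * S‖ ≤ 1 / 2)
    (Binv : H →L[ℝ] H)
    (hBinv : Binv * (Ψ.comp (adjoint Ψ) + lam • 1) = 1 ∧
      (Ψ.comp (adjoint Ψ) + lam • 1) * Binv = 1)
    (f : H) :
    ‖adjoint Ψ (Binv f)‖ ^ 2 ≤ 2 * @inner ℝ _ _ f (S (S f)) := by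
  obtain ⟨hS1, hS2⟩ := hS
  obtain ⟨hB1, hB2⟩ := hBinv
  set B : H →L[ℝ] H := Ψ.comp (adjoint Ψ) with hBdef
  set g : H := Binv f with hg
  -- self-adjointness of S as a bilinear identity
  have hSsa : ∀ x y : H, (inner ℝ (S x) y : ℝ) = inner ℝ x (S y) := by
    intro x y
    have h := hSpos.isSelfAdjoint
    rw [ContinuousLinearMap.isSelfAdjoint_iff'] at h
    conv_lhs => rw [← h]
    rw [adjoint_inner_left]
  -- S has two-sided inverse
  have hSright : S * (S * (L + lam • 1)) = 1 := by rw [← mul_assoc]; exact hS1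
  have hSleft : ((L + lam • 1) * S) * S = 1 := by rw [mul_assoc]; exact hS2
  have hcomm : (L + lam • 1) * S = S * (L + lam • 1) := by
    calc (L + lam • 1) * S
        = ((L + lam • 1) * S) * (S * (S * (L + lam • 1))) := by rw [hSright, mul_one]
      _ = (((L + lam • 1) * S) * S) * (S * (L + lam • 1)) := by
          simp only [mul_assoc]
      _ = S * (L + lam • 1) := by rw [hSleft, one_mul]
  have hSLS : S * (L + lam • 1) * S = 1 := by
    rw [← hcomm]; exact hSleft
  -- f = (B + lam)g
  have hf : (B + lam • 1) g = f := by
    have := congrArg (fun T : H →L[ℝ] H => T f) hB2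
    simpa only [ContinuousLinearMap.mul_apply, ContinuousLinearMap.one_apply] using this
  -- define u with S u = g
  set u : H := ((L + lam • 1) * S) g with hu
  have hSu : S u = g := by
    have h0 : S * ((L + lam • 1) * S) = 1 := by
      rw [← mul_assoc, ← hcomm]
      exact hSleft
    have := congrArg (fun T : H →L[ℝ] H => T g) h0
    simpa only [hu, ContinuousLinearMap.mul_apply, ContinuousLinearMap.one_apply] using this
  -- step A : norm of adjoint applied
  have stepA : ‖adjoint Ψ g‖ ^ 2 = (inner ℝ g (B g) : ℝ) := by
    rw [← real_inner_self_eq_norm_sq, real_inner_comm, adjoint_inner_left]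
    rfl
  -- step B : ⟪g, B g⟫ ≤ ⟪g, f⟫
  have stepB : (inner ℝ g (B g) : ℝ) ≤ inner ℝ g f := by
    rw [← hf]
    have : ((B + lam • 1) g : H) = B g + lam • g := by
      simp [ContinuousLinearMap.add_apply]
    rw [this, inner_add_right, real_inner_smul_right]
    have h0 : (0:ℝ) ≤ inner ℝ g g := real_inner_self_nonneg
    nlinarith [h0, hlam.le]
  -- step C : ⟪g, f⟫ = ⟪u, S f⟫
  have stepC : (inner ℝ g f : ℝ) = inner ℝ u (S f) := by
    rw [← hSu, hSsa]
  -- T decomposition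
  have hT : S * (B + lam • 1) * S = 1 + S * (B - L) * S := by
    have hsplit : B + lam • 1 = (B - L) + (L + lam • 1) := by abel
    rw [hsplit, mul_add, add_mul, hSLS, add_comm]
  -- S f = u + D u
  have hSf : S f = u + (S * (B - L) * S) u := by
    have h1 : S f = (S * (B + lam • 1) * S) u := by
      rw [ContinuousLinearMap.mul_apply, ContinuousLinearMap.mul_apply, hSu, hf]
    rw [h1, hT]
    simp [ContinuousLinearMap.add_apply, mul_apply]
  -- lower bound : (1/2)‖u‖² ≤ ⟪u, S f⟫
  have hDu : ‖(S * (B - L) * S) u‖ ≤ (1 / 2) * ‖u‖ := by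
    calc ‖(S * (B - L) * S) u‖ ≤ ‖S * (B - L) * S‖ * ‖u‖ := le_opNorm _ _
      _ ≤ (1 / 2) * ‖u‖ := by
          apply mul_le_mul_of_nonneg_right hcontrast (norm_nonneg _)
  have hlow : (1 / 2) * ‖u‖ ^ 2 ≤ (inner ℝ u (S f) : ℝ) := by
    rw [hSf, inner_add_right, real_inner_self_eq_norm_sq]
    have habs : |(inner ℝ u ((S * (B - L) * S) u) : ℝ)| ≤ (1 / 2) * ‖u‖ ^ 2 := by
      calc |(inner ℝ u ((S * (B - L) * S) u) : ℝ)|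
          ≤ ‖u‖ * ‖(S * (B - L) * S) u‖ := abs_real_inner_le_norm _ _
        _ ≤ ‖u‖ * ((1 / 2) * ‖u‖) := by
            exact mul_le_mul_of_nonneg_left hDu (norm_nonneg _)
        _ = (1 / 2) * ‖u‖ ^ 2 := by ring
    have := abs_le.mp habs
    linarith [this.1]
  -- upper bound via Cauchy-Schwarz
  have hcs : (inner ℝ u (S f) : ℝ) ≤ ‖u‖ * ‖S f‖ := real_inner_le_norm _ _
  have hfin : (inner ℝ u (S f) : ℝ) ≤ 2 * ‖S f‖ ^ 2 := by
    have hun : 0 ≤ ‖u‖ := norm_nonneg u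
    have hsn : 0 ≤ ‖S f‖ := norm_nonneg (S f)
    nlinarith [hlow, hcs, sq_nonneg (‖u‖ - 2 * ‖S f‖)]
  -- final
  have hfinal : 2 * ‖S f‖ ^ 2 = 2 * (inner ℝ f (S (S f)) : ℝ) := by
    rw [← real_inner_self_eq_norm_sq, hSsa f (S f)]
  calc ‖adjoint Ψ g‖ ^ 2 = (inner ℝ g (B g) : ℝ) := stepA
    _ ≤ inner ℝ g f := stepB
    _ = inner ℝ u (S f) := stepC
    _ ≤ 2 * ‖S f‖ ^ 2 := hfin
    _ = 2 * inner ℝ f (S (S f)) := hfinal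
end

section
/- Let H be a Hilbert space, λ > 0, and let v ↦ ψ_v ∈ H be a measurable family of vectors indexed by a measure space (V, ν) with probability density p, such that the positive self-adjoint bounded operator L = ∫_V (ψ_v ⊗ ψ_v) p(v) dν(v) exists as a Bochner integral. Define τ_λ(v) = p(v)⟨ψ_v, (L + λI)^{-1} ψ_v⟩, let τ̃ ≥ τ_λ ν-a.e. be measurable with d_τ̃ = ∫_V τ̃ dν < ∞, set q(v) = τ̃(v)/d_τ̃ and R_v = (p(v)/q(v)) (L + λI)^{-1/2} (ψ_v ⊗ ψ_v) (L + λI)^{-1/2}. Then, in the Loewner order on self-adjoint operators, ∫_V R_v² q(v) dν(v) ⪯ d_τ̃ · (L + λI)^{-1/2} L (L + λI)^{-1/2}. -/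
open MeasureTheory

set_option maxHeartbeats 1000000

/-- Matrix-variance bound for the reweighted rank-one summands: with
`R_v = (p(v)/q(v)) (L+λI)^{-1/2}(ψ_v ⊗ ψ_v)(L+λI)^{-1/2}` and `q = τ̃/d_τ̃`,
`∫ R_v² q(v) dν ⪯ d_τ̃ · (L+λI)^{-1/2} L (L+λI)^{-1/2}` in the Loewner order.
Here `S` is the (unique) positive self-adjoint square root of `(L+λI)^{-1}`. -/
theorem rank_one_summand_variance_bound
    {H : Type*} [NormedAddCommGroup H] [InnerProductSpace ℝ H] [CompleteSpace H]
    {V : Type*} [MeasurableSpace V] (ν : Measure V)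
    (ψv : V → H) (hψweak : ∀ f : H, Measurable fun v => (@inner ℝ _ _ (ψv v) f))
    (p : V → ℝ) (hpmeas : Measurable p) (hp0 : ∀ v, 0 ≤ p v)
    (L : H →L[ℝ] H) (hL : L.IsPositive)
    (hLint : Integrable (fun v => p v • (innerSL ℝ (ψv v)).smulRight (ψv v)) ν)
    (hLdef : L = ∫ v, p v • (innerSL ℝ (ψv v)).smulRight (ψv v) ∂ν)
    (lam : ℝ) (hlam : 0 < lam)
    (S : H →L[ℝ] H) (hSpos : S.IsPositive)
    (hS : S * S * (L + lam • 1) = 1 ∧ (L + lam • 1) * (S * S) = 1)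
    (tauTil : V → ℝ) (htaumeas : Measurable tauTil)
    (htau : ∀ᵐ v ∂ν, p v * @inner ℝ _ _ (ψv v) ((S * S) (ψv v)) ≤ tauTil v)
    (hint : Integrable tauTil ν) :
    (((∫ u, tauTil u ∂ν) • (S * L * S)) -
        ∫ v, (tauTil v / ∫ u, tauTil u ∂ν) •
          (((p v / (tauTil v / ∫ u, tauTil u ∂ν)) •
              (S * (innerSL ℝ (ψv v)).smulRight (ψv v) * S)) *
           ((p v / (tauTil v / ∫ u, tauTil u ∂ν)) •
              (S * (innerSL ℝ (ψv v)).smulRight (ψv v) * S))) ∂ν).IsPositive := by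
  have hSsym : ∀ x y : H, (inner ℝ (S x) y : ℝ) = inner ℝ x (S y) :=
    ContinuousLinearMap.isSelfAdjoint_iff_isSymmetric.mp hSpos.isSelfAdjoint
  have hflip : ∀ (a : V) (b : H), (inner ℝ (ψv a) (S b) : ℝ) = inner ℝ (S (ψv a)) b :=
    fun a b => (hSsym (ψv a) b).symm
  set d := ∫ u, tauTil u ∂ν with hd
  by_cases hd0 : d = 0
  · simp only [hd0, div_zero, zero_smul, integral_zero, sub_zero]
    exact ContinuousLinearMap.isPositive_zero
  set B : V → (H →L[ℝ] H) := fun v => (innerSL ℝ (ψv v)).smulRight (ψv v) with hB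
  set F : V → (H →L[ℝ] H) := fun v => p v • B v with hF
  set g : V → (H →L[ℝ] H) := fun v =>
    (tauTil v / d) • (((p v / (tauTil v / d)) • (S * B v * S)) *
      ((p v / (tauTil v / d)) • (S * B v * S))) with hg
  show ((d • (S * L * S)) - ∫ v, g v ∂ν).IsPositive
  -- basic positivity facts
  have htau' : ∀ᵐ v ∂ν, p v * ‖S (ψv v)‖ ^ 2 ≤ tauTil v := by
    filter_upwards [htau] with v h
    have : (inner ℝ (ψv v) ((S * S) (ψv v)) : ℝ) = ‖S (ψv v)‖ ^ 2 := by
      rw [show (S * S) (ψv v) = S (S (ψv v)) from rfl, ← hSsym, real_inner_self_eq_norm_sq]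
    rwa [this] at h
  have htau0 : ∀ᵐ v ∂ν, 0 ≤ tauTil v := by
    filter_upwards [htau'] with v h
    exact le_trans (mul_nonneg (hp0 v) (sq_nonneg _)) h
  have hdpos : 0 < d := lt_of_le_of_ne (integral_nonneg_of_ae htau0) (Ne.symm hd0)
  -- pointwise formulas
  have hBz : ∀ v z, B v z = (inner ℝ (ψv v) z : ℝ) • ψv v := fun v z => rfl
  have hAz : ∀ v z, (S * B v * S) z = (inner ℝ (S (ψv v)) z : ℝ) • S (ψv v) := by
    intro v z
    show S ((B v) (S z)) = _
    rw [hBz, _root_.map_smul, hflip]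
  have hgz : ∀ v z, g v z =
      ((tauTil v / d) * ((p v / (tauTil v / d)) * (p v / (tauTil v / d))) *
        ((inner ℝ (S (ψv v)) z : ℝ) * ‖S (ψv v)‖ ^ 2)) • S (ψv v) := by
    intro v z
    show (tauTil v / d) • (((p v / (tauTil v / d)) • (S * B v * S))
        (((p v / (tauTil v / d)) • (S * B v * S)) z)) = _
    simp only [ContinuousLinearMap.smul_apply, hAz, real_inner_smul_right,
      real_inner_self_eq_norm_sq, smul_smul]
    congr 1
    ring
  have hconj : ∀ v, S * F v * S = p v • (S * B v * S) := by
    intro v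
    ext z
    show S ((F v) (S z)) = _
    rw [show (F v) (S z) = p v • ((B v) (S z)) from rfl, _root_.map_smul]
    rfl
  have hGz : ∀ v z, (S * F v * S) z = (p v * (inner ℝ (S (ψv v)) z : ℝ)) • S (ψv v) := by
    intro v z
    rw [hconj, ContinuousLinearMap.smul_apply, hAz, smul_smul]
  have hGint : Integrable (fun v => S * F v * S) ν :=
    (((ContinuousLinearMap.compL ℝ H H H S).comp
      ((ContinuousLinearMap.compL ℝ H H H).flip S)).integrable_comp hLint)
  have hGnorm : ∀ v, ‖S * F v * S‖ ≤ p v * ‖S (ψv v)‖ ^ 2 := by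
    intro v
    refine ContinuousLinearMap.opNorm_le_bound _ (mul_nonneg (hp0 v) (sq_nonneg _)) fun z => ?_
    rw [hGz, norm_smul]
    simp only [Real.norm_eq_abs, abs_mul, abs_of_nonneg (hp0 v)]
    have h1 : |(inner ℝ (S (ψv v)) z : ℝ)| ≤ ‖S (ψv v)‖ * ‖z‖ := abs_real_inner_le_norm _ _
    calc p v * |(inner ℝ (S (ψv v)) z : ℝ)| * ‖S (ψv v)‖
        ≤ p v * (‖S (ψv v)‖ * ‖z‖) * ‖S (ψv v)‖ := by
          have := mul_le_mul_of_nonneg_left h1 (hp0 v)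
          exact mul_le_mul_of_nonneg_right this (norm_nonneg _)
      _ = p v * ‖S (ψv v)‖ ^ 2 * ‖z‖ := by ring
  -- g in terms of the conjugated integrand
  have hgG : ∀ v, g v = (tauTil v / d)⁻¹ • ((S * F v * S) * (S * F v * S)) := by
    intro v
    ext z
    rw [hgz]
    rw [show ((tauTil v / d)⁻¹ • ((S * F v * S) * (S * F v * S))) z
        = (tauTil v / d)⁻¹ • ((S * F v * S) ((S * F v * S) z)) from rfl]
    simp only [hGz, real_inner_smul_right, real_inner_self_eq_norm_sq, smul_smul]
    congr 1
    rcases eq_or_ne (tauTil v) 0 with h | h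
    · simp [h]
    · field_simp
  have hgmeas : AEStronglyMeasurable g ν := by
    have h1 : Measurable fun v => (tauTil v / d)⁻¹ := (htaumeas.div_const d).inv
    exact ((h1.aestronglyMeasurable.smul
      (hGint.aestronglyMeasurable.mul hGint.aestronglyMeasurable)).congr
        (Filter.Eventually.of_forall fun v => (hgG v).symm))
  have hgint : Integrable g ν := by
    refine Integrable.mono' (hint.const_mul d) hgmeas ?_
    filter_upwards [htau', htau0] with v h1 h0
    rw [hgG]
    rcases eq_or_lt_of_le h0 with h | h
    · rw [← h]
      simp
    · have hq : (0:ℝ) < (tauTil v / d)⁻¹ := inv_pos.mpr (div_pos h hdpos)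
      refine le_trans (norm_smul_le ((tauTil v / d)⁻¹) ((S * F v * S) * (S * F v * S))) ?_
      have hb : ‖(S * F v * S) * (S * F v * S)‖ ≤ tauTil v ^ 2 := by
        calc ‖(S * F v * S) * (S * F v * S)‖ ≤ ‖S * F v * S‖ * ‖S * F v * S‖ :=
              norm_mul_le _ _
          _ ≤ tauTil v * tauTil v :=
              mul_le_mul (le_trans (hGnorm v) h1) (le_trans (hGnorm v) h1) (norm_nonneg _) h0
          _ = tauTil v ^ 2 := (sq (tauTil v)).symm
      calc ‖(tauTil v / d)⁻¹‖ * ‖(S * F v * S) * (S * F v * S)‖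
          ≤ (tauTil v / d)⁻¹ * tauTil v ^ 2 := by
            rw [Real.norm_eq_abs, abs_of_pos hq]
            exact mul_le_mul_of_nonneg_left hb hq.le
        _ = d * tauTil v := by
            rw [inv_div, sq]
            field_simp [h.ne']
  -- inner products against integrals
  have happly : ∀ (z w : H), (inner ℝ ((∫ v, g v ∂ν) z) w : ℝ) =
      ∫ v, (inner ℝ ((g v) z) w : ℝ) ∂ν := by
    intro z w
    have hzint : Integrable (fun v => (g v) z) ν :=
      (ContinuousLinearMap.apply ℝ H z).integrable_comp hgint
    rw [ContinuousLinearMap.integral_apply hgint z,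
      show (inner ℝ (∫ v, (g v) z ∂ν) w : ℝ) = inner ℝ w (∫ v, (g v) z ∂ν) from
        real_inner_comm _ _,
      ← integral_inner hzint w]
    congr 1
    funext v
    exact real_inner_comm _ _
  have hLapply : ∀ (z w : H), (inner ℝ (L z) w : ℝ) =
      ∫ v, p v * ((inner ℝ (ψv v) z : ℝ) * (inner ℝ (ψv v) w : ℝ)) ∂ν := by
    intro z w
    have hzint : Integrable (fun v => (F v) z) ν :=
      (ContinuousLinearMap.apply ℝ H z).integrable_comp hLint
    rw [hLdef, ContinuousLinearMap.integral_apply hLint z,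
      show (inner ℝ (∫ v, (F v) z ∂ν) w : ℝ) = inner ℝ w (∫ v, (F v) z ∂ν) from
        real_inner_comm _ _,
      ← integral_inner hzint w]
    congr 1
    funext v
    rw [show (F v) z = p v • ((inner ℝ (ψv v) z : ℝ) • ψv v) from by rw [← hBz v z]; rfl,
      real_inner_smul_right, real_inner_smul_right, real_inner_comm w (ψv v)]
  have hSLS : ∀ (z w : H), (inner ℝ ((S * L * S) z) w : ℝ) =
      ∫ v, p v * ((inner ℝ (S (ψv v)) z : ℝ) * (inner ℝ (S (ψv v)) w : ℝ)) ∂ν := by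
    intro z w
    rw [show ((S * L * S) z) = S (L (S z)) from rfl, hSsym, hLapply]
    congr 1
    funext v
    rw [hflip, hflip]
  have hginner : ∀ v (z w : H), (inner ℝ ((g v) z) w : ℝ) =
      ((tauTil v / d) * ((p v / (tauTil v / d)) * (p v / (tauTil v / d))) * ‖S (ψv v)‖ ^ 2) *
        ((inner ℝ (S (ψv v)) z : ℝ) * (inner ℝ (S (ψv v)) w : ℝ)) := by
    intro v z w
    rw [hgz, real_inner_smul_left]
    ring
  -- integrability of scalar integrands
  have hscal1 : ∀ z : H, Integrable
      (fun v => p v * ((inner ℝ (S (ψv v)) z : ℝ) * (inner ℝ (S (ψv v)) z : ℝ))) ν := by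
    intro z
    have h := (((innerSL ℝ (S z)).comp
      (ContinuousLinearMap.apply ℝ H (S z))).integrable_comp hLint)
    refine h.congr (Filter.Eventually.of_forall fun v => ?_)
    show (inner ℝ (S z) ((F v) (S z)) : ℝ)
        = p v * ((inner ℝ (S (ψv v)) z : ℝ) * (inner ℝ (S (ψv v)) z : ℝ))
    rw [show (F v) (S z) = p v • ((inner ℝ (ψv v) (S z) : ℝ) • ψv v) from by
        rw [← hBz v (S z)]; rfl,
      real_inner_smul_right, real_inner_smul_right, hflip v z, hSsym z (ψv v),
      real_inner_comm z (S (ψv v))]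
  have hscal2 : Integrable (fun v => (inner ℝ ((g v) ((0:H))) ((0:H)) : ℝ)) ν := by
    exact (((innerSL ℝ (0:H)).comp
      (ContinuousLinearMap.apply ℝ H (0:H))).integrable_comp hgint).congr
      (Filter.Eventually.of_forall fun v => real_inner_comm _ _)
  have hscal2' : ∀ x : H, Integrable (fun v => (inner ℝ ((g v) x) x : ℝ)) ν := by
    intro x
    exact (((innerSL ℝ x).comp
      (ContinuousLinearMap.apply ℝ H x)).integrable_comp hgint).congr
      (Filter.Eventually.of_forall fun v => real_inner_comm _ _)
  refine ContinuousLinearMap.isPositive_def'.mpr ⟨?_, ?_⟩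
  · -- self-adjointness
    have h1 : IsSelfAdjoint (S * L * S) := by
      have := hL.isSelfAdjoint.conjugate S
      rwa [hSpos.isSelfAdjoint.star_eq] at this
    have h2 : IsSelfAdjoint (∫ v, g v ∂ν) := by
      rw [ContinuousLinearMap.isSelfAdjoint_iff_isSymmetric]
      intro z w
      show (inner ℝ ((∫ v, g v ∂ν) z) w : ℝ) = inner ℝ z ((∫ v, g v ∂ν) w)
      rw [happly z w,
        show (inner ℝ z ((∫ v, g v ∂ν) w) : ℝ) = inner ℝ ((∫ v, g v ∂ν) w) z from
          real_inner_comm _ _,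
        happly w z]
      congr 1
      funext v
      rw [hginner, hginner]
      ring
    exact (IsSelfAdjoint.smul (star_trivial d) h1).sub h2
  · -- nonnegativity
    intro x
    have hre : ContinuousLinearMap.reApplyInnerSelf
        ((d • (S * L * S)) - ∫ v, g v ∂ν) x =
        (inner ℝ (((d • (S * L * S)) - ∫ v, g v ∂ν) x) x : ℝ) := by
      simp [ContinuousLinearMap.reApplyInnerSelf]
    rw [hre, ContinuousLinearMap.sub_apply, inner_sub_left,
      ContinuousLinearMap.smul_apply, real_inner_smul_left, happly x x, hSLS x x,
      sub_nonneg, ← integral_const_mul]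
    refine integral_mono_ae (hscal2' x) ((hscal1 x).const_mul d) ?_
    filter_upwards [htau', htau0] with v h1 h0
    rw [hginner]
    have hsq : (0:ℝ) ≤ (inner ℝ (S (ψv v)) x : ℝ) * (inner ℝ (S (ψv v)) x : ℝ) :=
      mul_self_nonneg _
    have hcle : (tauTil v / d) * ((p v / (tauTil v / d)) * (p v / (tauTil v / d))) *
        ‖S (ψv v)‖ ^ 2 ≤ d * p v := by
      rcases eq_or_lt_of_le h0 with h | h
      · rw [← h]
        simp only [zero_div, zero_mul]
        exact mul_nonneg hdpos.le (hp0 v)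
      · have hq : (0:ℝ) < tauTil v / d := div_pos h hdpos
        have hkey : p v * (p v * ‖S (ψv v)‖ ^ 2) ≤ p v * (tauTil v / d * d) := by
          refine mul_le_mul_of_nonneg_left ?_ (hp0 v)
          rw [div_mul_cancel₀ _ hd0]
          exact h1
        calc (tauTil v / d) * ((p v / (tauTil v / d)) * (p v / (tauTil v / d))) *
              ‖S (ψv v)‖ ^ 2
            = (p v * (p v * ‖S (ψv v)‖ ^ 2)) / (tauTil v / d) := by
              field_simp
          _ ≤ (p v * (tauTil v / d * d)) / (tauTil v / d) := by
              rw [div_eq_mul_inv, div_eq_mul_inv]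
              exact mul_le_mul_of_nonneg_right hkey (inv_nonneg.mpr hq.le)
          _ = d * p v := by
              field_simp
    calc (tauTil v / d) * ((p v / (tauTil v / d)) * (p v / (tauTil v / d))) * ‖S (ψv v)‖ ^ 2 *
          ((inner ℝ (S (ψv v)) x : ℝ) * (inner ℝ (S (ψv v)) x : ℝ))
        ≤ d * p v * ((inner ℝ (S (ψv v)) x : ℝ) * (inner ℝ (S (ψv v)) x : ℝ)) :=
          mul_le_mul_of_nonneg_right hcle hsq
      _ = d * (p v * ((inner ℝ (S (ψv v)) x : ℝ) * (inner ℝ (S (ψv v)) x : ℝ))) := by ring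
end

section
/- Let γ > 1/2, C₀ > 0, λ > 0, and let (μᵢ)_{i≥1} be a sequence of reals with 0 ≤ μᵢ ≤ C₀ i^{-2γ} for all i ≥ 1. Then the effective degrees of freedom satisfies Σ_{i≥1} μᵢ/(μᵢ + λ) ≤ (2γ/(2γ − 1)) · (C₀/λ)^{1/(2γ)} + 1. -/
open MeasureTheory Set

lemma tail_rpow_tsum_bound (s : ℝ) (hs : 1 < s) (n : ℕ) (hn : 1 ≤ n) :
    ∑' i : ℕ, ((n : ℝ) + i + 1) ^ (-s) ≤ (n : ℝ) ^ (1 - s) / (s - 1) := by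
  have hnpos : (0:ℝ) < n := by exact_mod_cast hn
  have hneg : -s < -1 := by linarith
  apply Real.tsum_le_of_sum_range_le (fun i => Real.rpow_nonneg (by positivity) _)
  intro m
  have hanti : AntitoneOn (fun x : ℝ => x ^ (-s)) (Icc (n:ℝ) ((n:ℝ) + m)) := by
    intro x hx y hy hxy
    exact Real.rpow_le_rpow_of_nonpos (lt_of_lt_of_le hnpos hx.1) hxy (by linarith)
  have h1 := hanti.sum_le_integral
  have h2 : ∑ i ∈ Finset.range m, ((n:ℝ) + i + 1) ^ (-s)
      = ∑ i ∈ Finset.range m, ((n:ℝ) + ((i:ℕ)+1 : ℕ)) ^ (-s) := by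
    apply Finset.sum_congr rfl; intro i _; push_cast; ring_nf
  rw [h2]
  refine h1.trans ?_
  have hle : (n:ℝ) ≤ (n:ℝ) + m := le_add_of_nonneg_right (Nat.cast_nonneg m)
  rw [intervalIntegral.integral_of_le hle]
  have hint : IntegrableOn (fun x : ℝ => x ^ (-s)) (Ioi (n:ℝ)) :=
    integrableOn_Ioi_rpow_of_lt hneg hnpos
  have h3 : ∫ x in Ioc (n:ℝ) ((n:ℝ)+m), x ^ (-s) ≤ ∫ x in Ioi (n:ℝ), x ^ (-s) := by
    apply setIntegral_mono_set hint
    · filter_upwards [self_mem_ae_restrict measurableSet_Ioi] with x hx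
      exact Real.rpow_nonneg (le_of_lt (lt_trans hnpos hx)) _
    · exact Filter.Eventually.of_forall Ioc_subset_Ioi_self
  refine h3.trans ?_
  rw [integral_Ioi_rpow_of_lt hneg hnpos, show (1:ℝ) - s = -s + 1 by ring]
  have h4 : -(n:ℝ) ^ (-s+1) / (-s+1) = (n:ℝ) ^ (-s+1) / (s-1) := by
    rw [show -s + 1 = -(s-1) by ring, div_neg, neg_div, neg_neg]
  exact le_of_eq h4

/-- Under polynomial eigenvalue decay `μᵢ ≤ C₀ i^{-2γ}` (eigenvalues indexed by `i ≥ 1`,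
here realized as `μ (i+1)`-style shift: `μ i` bounds correspond to index `i+1`),
the effective degrees of freedom `Σᵢ μᵢ/(μᵢ + λ)` is at most
`(2γ/(2γ-1)) (C₀/λ)^{1/(2γ)} + 1`. -/
theorem effective_degrees_of_freedom_polynomial_decay
    (γ C₀ lam : ℝ) (hγ : 1 / 2 < γ) (hC₀ : 0 < C₀) (hlam : 0 < lam)
    (μ : ℕ → ℝ) (hμ0 : ∀ i, 0 ≤ μ i)
    (hμ : ∀ i : ℕ, μ i ≤ C₀ * ((i + 1 : ℝ)) ^ (-(2 * γ))) :
    ∑' i : ℕ, μ i / (μ i + lam) ≤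
      (2 * γ / (2 * γ - 1)) * (C₀ / lam) ^ (1 / (2 * γ)) + 1 := by
  set s := 2 * γ with hsdef
  have hs : 1 < s := by simp only [hsdef]; linarith
  have hCl : 0 < C₀ / lam := div_pos hC₀ hlam
  set T := (C₀ / lam) ^ (1 / s) with hTdef
  have hT : 0 < T := Real.rpow_pos_of_pos hCl _
  set n := ⌈T⌉₊ with hndef
  have hn1 : 1 ≤ n := Nat.one_le_iff_ne_zero.mpr (Nat.ceil_pos.mpr hT).ne'
  have hTn : T ≤ (n:ℝ) := Nat.le_ceil T
  have hnT1 : (n:ℝ) ≤ T + 1 := (Nat.ceil_lt_add_one hT.le).le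
  set g : ℕ → ℝ := fun i => min 1 ((C₀/lam) * ((i:ℝ)+1)^(-s)) with hgdef
  have hfle : ∀ i, μ i / (μ i + lam) ≤ g i := by
    intro i
    have hμi := hμ0 i
    have hden : 0 < μ i + lam := by linarith
    refine le_min ?_ ?_
    · rw [div_le_one hden]; linarith
    · calc μ i / (μ i + lam) ≤ μ i / lam := by
            apply div_le_div_of_nonneg_left hμi hlam; linarith
        _ ≤ (C₀ * ((i:ℝ)+1)^(-s)) / lam := by
            gcongr
            exact hμ i
        _ = (C₀/lam) * ((i:ℝ)+1)^(-s) := by ring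
  have hg0 : ∀ i, 0 ≤ g i := by
    intro i
    refine le_min one_pos.le ?_
    positivity
  have hh : Summable (fun i : ℕ => (C₀/lam) * ((i:ℝ)+1)^(-s)) := by
    apply Summable.mul_left
    have h1 : Summable (fun i : ℕ => ((i:ℝ))^(-s)) := by
      rw [Real.summable_nat_rpow]; linarith
    have h2 := (summable_nat_add_iff 1).mpr h1
    refine h2.congr fun i => ?_
    push_cast
    ring_nf
  have hg : Summable g := Summable.of_nonneg_of_le hg0 (fun i => min_le_right _ _) hh
  have hf : Summable (fun i => μ i / (μ i + lam)) := by
    refine Summable.of_nonneg_of_le (fun i => div_nonneg (hμ0 i) (by linarith [hμ0 i])) hfle hg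
  have step1 : ∑' i, μ i / (μ i + lam) ≤ ∑' i, g i := Summable.tsum_le_tsum hfle hf hg
  have hsplit : ∑' i, g i = ∑ i ∈ Finset.range n, g i + ∑' i, g (i + n) :=
    (Summable.sum_add_tsum_nat_add n hg).symm
  have hhead : ∑ i ∈ Finset.range n, g i ≤ (n:ℝ) := by
    calc ∑ i ∈ Finset.range n, g i ≤ ∑ _i ∈ Finset.range n, (1:ℝ) :=
          Finset.sum_le_sum (fun i _ => min_le_left _ _)
      _ = (n:ℝ) := by simp
  have htail : ∑' i, g (i + n) ≤ T / (s - 1) := by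
    have hgt : Summable (fun i : ℕ => g (i + n)) := (summable_nat_add_iff n).mpr hg
    have hht : Summable (fun i : ℕ => (C₀/lam) * ((n:ℝ) + i + 1)^(-s)) := by
      apply Summable.mul_left
      have h1 : Summable (fun i : ℕ => ((i:ℝ))^(-s)) := by
        rw [Real.summable_nat_rpow]; linarith
      have h2 := (summable_nat_add_iff (n+1)).mpr h1
      refine h2.congr fun i => ?_
      push_cast
      ring_nf
    have h1 : ∑' i, g (i + n) ≤ ∑' i : ℕ, (C₀/lam) * ((n:ℝ) + i + 1)^(-s) := by
      refine Summable.tsum_le_tsum (fun i => ?_) hgt hht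
      have : (((i + n : ℕ) : ℝ) + 1) = (n:ℝ) + i + 1 := by push_cast; ring
      calc g (i + n) ≤ (C₀/lam) * (((i + n : ℕ):ℝ)+1)^(-s) := min_le_right _ _
        _ = (C₀/lam) * ((n:ℝ) + i + 1)^(-s) := by rw [this]
    refine h1.trans ?_
    rw [tsum_mul_left]
    have h2 := tail_rpow_tsum_bound s hs n hn1
    have h3 : (n:ℝ)^(1-s) ≤ T^(1-s) := Real.rpow_le_rpow_of_nonpos hT hTn (by linarith)
    have hTs : (C₀/lam) * T^(1-s) = T := by
      have : T ^ s = C₀ / lam := by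
        rw [hTdef, ← Real.rpow_mul hCl.le, one_div, inv_mul_cancel₀ (by linarith : s ≠ 0),
          Real.rpow_one]
      rw [← this, ← Real.rpow_add hT, show s + (1 - s) = 1 by ring, Real.rpow_one]
    calc (C₀/lam) * ∑' i : ℕ, ((n:ℝ) + i + 1)^(-s)
        ≤ (C₀/lam) * ((n:ℝ)^(1-s)/(s-1)) := by
          apply mul_le_mul_of_nonneg_left h2 hCl.le
      _ ≤ (C₀/lam) * (T^(1-s)/(s-1)) := by
          apply mul_le_mul_of_nonneg_left _ hCl.le
          exact div_le_div_of_nonneg_right h3 (by linarith)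
      _ = T / (s-1) := by rw [mul_div_assoc'] ; rw [hTs]
  have key : T + 1 + T/(s-1) = s/(s-1)*T + 1 := by
    have h1 : s - 1 ≠ 0 := by linarith
    field_simp [h1]
    ring
  calc ∑' i, μ i / (μ i + lam) ≤ ∑' i, g i := step1
    _ = ∑ i ∈ Finset.range n, g i + ∑' i, g (i + n) := hsplit
    _ ≤ (n:ℝ) + T/(s-1) := add_le_add hhead htail
    _ ≤ T + 1 + T/(s-1) := by linarith
    _ = s/(s-1)*T + 1 := key
end

section
/- Let n ≥ 1, let a₁ ≥ a₂ ≥ … ≥ a_n ≥ 0 be a nonincreasing sequence of nonnegative reals, and let t ≥ 0. Then Σ_{i=1}^n min(t, aᵢ) = min_{0 ≤ h ≤ n} ( h·t + Σ_{i=h+1}^n aᵢ ). -/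
/-- For a nonincreasing sequence `a 0 ≥ a 1 ≥ … ≥ a (n-1) ≥ 0` (representing `a₁ ≥ … ≥ a_n`)
and `t ≥ 0`, we have `Σ_{i<n} min t (a i) = min_{0 ≤ h ≤ n} (h·t + Σ_{h ≤ i < n} a i)`. -/
theorem sum_min_eq_min_head_tail
    (n : ℕ) (hn : 1 ≤ n) (a : ℕ → ℝ)
    (ha0 : ∀ i < n, 0 ≤ a i)
    (hmono : ∀ i j, i ≤ j → j < n → a j ≤ a i)
    (t : ℝ) (ht : 0 ≤ t) :
    ∑ i ∈ Finset.range n, min t (a i) =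
      (Finset.range (n + 1)).inf' Finset.nonempty_range_add_one
        (fun h => (h : ℝ) * t + ∑ i ∈ Finset.Ico h n, a i) := by
  have hex : ∃ h, h = n ∨ (h < n ∧ a h ≤ t) := ⟨n, Or.inl rfl⟩
  set h := Nat.find hex with hh
  have hspec := Nat.find_spec hex
  have hle : h ≤ n := by
    rcases hspec with h1 | h2
    · exact h1.le
    · exact h2.1.le
  have hlt : ∀ i < h, t < a i := by
    intro i hi
    have := Nat.find_min hex hi
    push_neg at this
    have hin : i < n := lt_of_lt_of_le hi hle
    exact this.2 hin
  have hge : ∀ i, h ≤ i → i < n → a i ≤ t := by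
    intro i hhi hin
    have hhn : h < n := lt_of_le_of_lt hhi hin
    rcases hspec with h1 | h2
    · omega
    · exact le_trans (hmono h i hhi hin) h2.2
  have key : ∑ i ∈ Finset.range n, min t (a i)
      = (h : ℝ) * t + ∑ i ∈ Finset.Ico h n, a i := by
    rw [Finset.range_eq_Ico, ← Finset.sum_Ico_consecutive _ (Nat.zero_le h) hle]
    congr 1
    · rw [← Finset.range_eq_Ico]
      rw [Finset.sum_congr rfl (fun i hi => min_eq_left
        (le_of_lt (hlt i (Finset.mem_range.mp hi))))]
      simp [mul_comm]
    · refine Finset.sum_congr rfl fun i hi => ?_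
      rw [Finset.mem_Ico] at hi
      exact min_eq_right (hge i hi.1 hi.2)
  apply le_antisymm
  · apply Finset.le_inf'
    intro h' hh'
    have hh'le : h' ≤ n := Nat.lt_succ_iff.mp (Finset.mem_range.mp hh')
    rw [Finset.range_eq_Ico, ← Finset.sum_Ico_consecutive _ (Nat.zero_le h') hh'le]
    apply add_le_add
    · calc ∑ i ∈ Finset.Ico 0 h', min t (a i) ≤ ∑ i ∈ Finset.Ico 0 h', t :=
            Finset.sum_le_sum fun i _ => min_le_left _ _
        _ = (h' : ℝ) * t := by simp [mul_comm]
    · exact Finset.sum_le_sum fun i _ => min_le_right _ _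
  · rw [key]
    exact Finset.inf'_le _ (Finset.mem_range.mpr (Nat.lt_succ_of_le hle))
end

section
/- Let φ: [0,∞) → [0,∞) be a sub-root function, i.e. φ is nondecreasing and r ↦ φ(r)/√r is nonincreasing on (0,∞), and suppose φ(r₀) > 0 for some r₀ > 0. Then the equation φ(r) = r has a unique positive solution r*, and for every r > 0, r ≥ φ(r) if and only if r ≥ r*. -/
/-- If `b * √a ≤ a * √b` with `a, b > 0`, then `b ≤ a`. -/
lemma subroot_aux (a b : ℝ) (ha : 0 < a) (hb : 0 < b)
    (h : b * Real.sqrt a ≤ a * Real.sqrt b) : b ≤ a := by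
  have hsa : 0 < Real.sqrt a := Real.sqrt_pos.2 ha
  have hsb : 0 < Real.sqrt b := Real.sqrt_pos.2 hb
  have ha2 : Real.sqrt a * Real.sqrt a = a := Real.mul_self_sqrt ha.le
  have hb2 : Real.sqrt b * Real.sqrt b = b := Real.mul_self_sqrt hb.le
  have hsle : Real.sqrt b ≤ Real.sqrt a := by nlinarith [mul_pos hsa hsb]
  nlinarith

/-- A sub-root function (nonnegative, nondecreasing, with `φ(r)/√r` nonincreasing on `(0,∞)`)
that is positive somewhere has a unique positive fixed point `r*`, and for every `r > 0`,
`φ(r) ≤ r` if and only if `r* ≤ r`. -/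
theorem subroot_unique_fixed_point
    (φ : ℝ → ℝ)
    (hnonneg : ∀ r, 0 ≤ r → 0 ≤ φ r)
    (hmono : MonotoneOn φ (Set.Ici (0 : ℝ)))
    (hsubroot : AntitoneOn (fun r => φ r / Real.sqrt r) (Set.Ioi (0 : ℝ)))
    (hpos : ∃ r₀ : ℝ, 0 < r₀ ∧ 0 < φ r₀) :
    ∃ rstar : ℝ, 0 < rstar ∧ φ rstar = rstar ∧
      (∀ r : ℝ, 0 < r → φ r = r → r = rstar) ∧
      (∀ r : ℝ, 0 < r → (φ r ≤ r ↔ rstar ≤ r)) := by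
  obtain ⟨r₀, hr₀, hφr₀⟩ := hpos
  have hsr₀ : 0 < Real.sqrt r₀ := Real.sqrt_pos.2 hr₀
  set c := φ r₀ / Real.sqrt r₀ with hc
  have hcpos : 0 < c := div_pos hφr₀ hsr₀
  have hφr₀c : φ r₀ = c * Real.sqrt r₀ := by rw [hc, div_mul_cancel₀ _ hsr₀.ne']
  -- key inequality: for 0 < s ≤ r, φ r * √s ≤ φ s * √r
  have key : ∀ s r : ℝ, 0 < s → s ≤ r → φ r * Real.sqrt s ≤ φ s * Real.sqrt r := by
    intro s r hs hsr
    have hr : 0 < r := hs.trans_le hsr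
    have h := hsubroot (Set.mem_Ioi.2 hs) (Set.mem_Ioi.2 hr) hsr
    simp only at h
    rw [div_le_div_iff₀ (Real.sqrt_pos.2 hr) (Real.sqrt_pos.2 hs)] at h
    exact h
  set S := {r : ℝ | 0 < r ∧ r ≤ φ r} with hS
  -- S is nonempty
  have hr₁pos : 0 < min r₀ (c ^ 2) := lt_min hr₀ (by positivity)
  have hr₁mem : min r₀ (c ^ 2) ∈ S := by
    constructor
    · exact hr₁pos
    · set r₁ := min r₀ (c ^ 2)
      have h1 := key r₁ r₀ hr₁pos (min_le_left _ _)
      have hs1 : 0 < Real.sqrt r₁ := Real.sqrt_pos.2 hr₁pos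
      have hs2 : Real.sqrt r₁ * Real.sqrt r₁ = r₁ := Real.mul_self_sqrt hr₁pos.le
      have hs3 : Real.sqrt r₁ ≤ c := by
        have : Real.sqrt r₁ ≤ Real.sqrt (c ^ 2) := Real.sqrt_le_sqrt (min_le_right _ _)
        rwa [Real.sqrt_sq hcpos.le] at this
      rw [hφr₀c] at h1
      have hcs : c * Real.sqrt r₁ ≤ φ r₁ := by
        have h' : (c * Real.sqrt r₁) * Real.sqrt r₀ ≤ φ r₁ * Real.sqrt r₀ := by
          nlinarith
        exact le_of_mul_le_mul_right h' hsr₀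
      have h'' : Real.sqrt r₁ * Real.sqrt r₁ ≤ c * Real.sqrt r₁ :=
        mul_le_mul_of_nonneg_right hs3 hs1.le
      linarith
  have hne : S.Nonempty := ⟨_, hr₁mem⟩
  -- S is bounded above
  have hbdd : BddAbove S := by
    refine ⟨max r₀ (c ^ 2), fun r hr => ?_⟩
    obtain ⟨hrpos, hrle⟩ := hr
    by_contra hgt
    push_neg at hgt
    have hr₀r : r₀ ≤ r := (le_max_left _ _).trans hgt.le
    have h1 := key r₀ r hr₀ hr₀r
    have hsr : 0 < Real.sqrt r := Real.sqrt_pos.2 hrpos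
    have hs2 : Real.sqrt r * Real.sqrt r = r := Real.mul_self_sqrt hrpos.le
    have hclt : c < Real.sqrt r := by
      have : Real.sqrt (c ^ 2) < Real.sqrt r :=
        Real.sqrt_lt_sqrt (by positivity) ((le_max_right _ _).trans_lt hgt)
      rwa [Real.sqrt_sq hcpos.le] at this
    rw [hφr₀c] at h1
    -- φ r * √r₀ ≤ c * √r₀ * √r, so φ r ≤ c √r < r
    have hφle : φ r ≤ c * Real.sqrt r := by
      have h' : φ r * Real.sqrt r₀ ≤ (c * Real.sqrt r) * Real.sqrt r₀ := by nlinarith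
      exact le_of_mul_le_mul_right h' hsr₀
    have h'' : c * Real.sqrt r < Real.sqrt r * Real.sqrt r :=
      mul_lt_mul_of_pos_right hclt hsr
    linarith
  set rstar := sSup S with hrstar
  have hr₁le : min r₀ (c ^ 2) ≤ rstar := le_csSup hbdd hr₁mem
  have hrspos : 0 < rstar := hr₁pos.trans_le hr₁le
  -- rstar ≤ φ rstar
  have hle1 : rstar ≤ φ rstar := by
    apply csSup_le hne
    intro r hr
    obtain ⟨hrpos, hrle⟩ := hr
    exact hrle.trans (hmono (Set.mem_Ici.2 hrpos.le) (Set.mem_Ici.2 hrspos.le)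
      (le_csSup hbdd ⟨hrpos, hrle⟩))
  -- φ rstar ≤ rstar
  have hfix : φ rstar = rstar := by
    refine le_antisymm ?_ hle1
    by_contra h
    push_neg at h
    have hsmem : φ rstar ∈ S := by
      refine ⟨hrspos.trans h, ?_⟩
      exact hmono (Set.mem_Ici.2 hrspos.le) (Set.mem_Ici.2 (hrspos.trans h).le) h.le
    have := le_csSup hbdd hsmem
    linarith
  refine ⟨rstar, hrspos, hfix, ?_, ?_⟩
  · -- uniqueness
    intro r hr hfr
    rcases le_total r rstar with hle | hle
    · refine le_antisymm hle ?_
      have h1 := key r rstar hr hle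
      rw [hfix, hfr] at h1
      exact subroot_aux r rstar hr hrspos h1
    · refine le_antisymm ?_ hle
      have h1 := key rstar r hrspos hle
      rw [hfix, hfr] at h1
      exact subroot_aux rstar r hrspos hr h1
  · -- iff
    intro r hr
    constructor
    · intro hφr
      by_contra hlt
      push_neg at hlt
      have h1 := key r rstar hr hlt.le
      rw [hfix] at h1
      have hsrs : (0:ℝ) ≤ Real.sqrt rstar := Real.sqrt_nonneg _
      have h2 : rstar * Real.sqrt r ≤ r * Real.sqrt rstar :=
        h1.trans (mul_le_mul_of_nonneg_right hφr hsrs)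
      exact absurd (subroot_aux r rstar hr hrspos h2) (not_le.2 hlt)
    · intro hge
      have h1 := key rstar r hrspos hge
      rw [hfix] at h1
      have hsr : 0 < Real.sqrt r := Real.sqrt_pos.2 hr
      have hss : 0 < Real.sqrt rstar := Real.sqrt_pos.2 hrspos
      have h2 : Real.sqrt rstar * Real.sqrt rstar = rstar := Real.mul_self_sqrt hrspos.le
      have h3 : Real.sqrt r * Real.sqrt r = r := Real.mul_self_sqrt hr.le
      have h4 : Real.sqrt rstar ≤ Real.sqrt r := Real.sqrt_le_sqrt hge
      have h5 : φ r * Real.sqrt rstar ≤ r * Real.sqrt rstar := by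
        have h6 : (Real.sqrt rstar * Real.sqrt r) * Real.sqrt rstar ≤
            (Real.sqrt rstar * Real.sqrt r) * Real.sqrt r :=
          mul_le_mul_of_nonneg_left h4 (mul_nonneg hss.le hsr.le)
        nlinarith
      exact le_of_mul_le_mul_right h5 hss
end
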